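/- Sherali-Adams feasibility of the laminar gap instance: for the L+1-level full-binary-tree instance of 1|r_j,d_j|Σ p_j U'_j above (T = (L+1)2^L, n = 2^{L+1}−1 jobs), consider the LP with variables x_{j,t} for each job j and each of the L+1 start times t ∈ [r_j, d_j) that are multiples of p_j, with constraints: Σ_{(j,t)} x_{j,t} p_j ≥ (1−ε)T; Σ_t x_{j,t} ≤ 1 for each j; Σ_{(j,t): t' ∈ (t, t+p_j]} x_{j,t} ≤ 1 for each time t' ∈ [T]; and x_{j,t} ≥ 0. Setting ε' = ε/4 and q = ⌊ε'(L+1)⌋, the assignment x_S = ((1−ε')/(L+1))^{|S|} for every conflict-free set S of at most q pairs (and x_S = 0 for sets with conflicts) is a feasible solution to the q-round Sherali-Adams lift of this LP. -/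

import Mathlib

open Finset

/-- The jobs of the laminar gap instance: a full binary tree with `L+1` levels; level `ℓ`
has `2^ℓ` jobs. -/
def TreeJob (L : ℕ) := (ℓ : Fin (L + 1)) × Fin (2 ^ (ℓ : ℕ))

instance (L : ℕ) : Fintype (TreeJob L) := by unfold TreeJob; infer_instance
instance (L : ℕ) : DecidableEq (TreeJob L) := by unfold TreeJob; infer_instance

/-- The size of a level-`ℓ` job is `2^(L−ℓ)`. -/
def treeSize (L : ℕ) (j : TreeJob L) : ℕ := 2 ^ (L - (j.1 : ℕ))

/-- The `k`-th job at level `ℓ` has release time `(L+1)·k·2^(L−ℓ)`. -/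
def treeRel (L : ℕ) (j : TreeJob L) : ℕ := (L + 1) * (j.2 : ℕ) * 2 ^ (L - (j.1 : ℕ))

/-- The variable index set of the LP: a job together with one of its `L+1` candidate
start times (the multiples of `p_j` inside the window). -/
def SAIdx (L : ℕ) := TreeJob L × Fin (L + 1)

instance (L : ℕ) : Fintype (SAIdx L) := by unfold SAIdx; infer_instance
instance (L : ℕ) : DecidableEq (SAIdx L) := by unfold SAIdx; infer_instance

/-- The start time represented by an index: `r_j + a·p_j`. -/
def istart (L : ℕ) (v : SAIdx L) : ℕ := treeRel L v.1 + (v.2 : ℕ) * treeSize L v.1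

/-- A set `S` of (job, start-time) pairs is conflict-free iff no job appears twice and
the processing intervals `(t, t + p_j]` of distinct pairs do not overlap
(i.e. `S` does not "lead to a contradiction"). -/
def ConflictFree (L : ℕ) (S : Finset (SAIdx L)) : Prop :=
  ∀ a ∈ S, ∀ b ∈ S, a ≠ b →
    a.1 ≠ b.1 ∧
    (istart L a + treeSize L a.1 ≤ istart L b ∨ istart L b + treeSize L b.1 ≤ istart L a)

instance (L : ℕ) (S : Finset (SAIdx L)) : Decidable (ConflictFree L S) := by
  unfold ConflictFree; infer_instance

/-- The candidate Sherali-Adams solution: `x_S = ((1−ε/4)/(L+1))^{|S|}` for conflict-free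
`S`, and `0` otherwise. -/
noncomputable def xsol (L : ℕ) (ε : ℝ) (S : Finset (SAIdx L)) : ℝ :=
  if ConflictFree L S then ((1 - ε / 4) / ((L : ℝ) + 1)) ^ S.card else 0

/-- Linearized Sherali-Adams constraints for a single LP row `∑ v, c v * x v ≤ dd`,
over an arbitrary finite variable index type. -/
def SArowI (ι : Type) [Fintype ι] [DecidableEq ι] (rr : ℕ) (c : ι → ℝ) (dd : ℝ)
    (x : Finset ι → ℝ) : Prop :=
  ∀ S T : Finset ι, Disjoint S T → S.card + T.card + 1 ≤ rr →
    ∑ T' ∈ T.powerset, (-1 : ℝ) ^ T'.card *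
      ((∑ v, c v * x (insert v (S ∪ T'))) - dd * x (S ∪ T')) ≤ 0


lemma alt_bounds (K : ℕ) : ∀ (a : ℕ → ℝ), (∀ k, 0 ≤ a k) → (∀ k, a (k+1) ≤ a k) →
    0 ≤ ∑ k ∈ range K, (-1:ℝ)^k * a k ∧ ∑ k ∈ range K, (-1:ℝ)^k * a k ≤ a 0 := by
  induction K with
  | zero => intro a h0 _; simp [h0 0]
  | succ K ih =>
    intro a h0 hm
    have hre : ∑ k ∈ range (K+1), (-1:ℝ)^k * a k
        = a 0 - ∑ k ∈ range K, (-1:ℝ)^k * a (k+1) := by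
      rw [Finset.sum_range_succ' (fun k => (-1:ℝ)^k * a k) K]
      have h1 : ∀ k ∈ range K, (-1:ℝ)^(k+1) * a (k+1) = -((-1:ℝ)^k * a (k+1)) := by
        intro k _; ring
      rw [Finset.sum_congr rfl h1, Finset.sum_neg_distrib]
      simp only [pow_zero, one_mul]; ring
    obtain ⟨h1, h2⟩ := ih (fun k => a (k+1)) (fun k => h0 _) (fun k => hm _)
    constructor
    · rw [hre]; have := hm 0; linarith
    · rw [hre]; linarith

lemma alt_lower (K : ℕ) (a : ℕ → ℝ) (h0 : ∀ k, 0 ≤ a k) (hm : ∀ k, a (k+1) ≤ a k) :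
    a 0 - a 1 ≤ ∑ k ∈ range (K+1), (-1:ℝ)^k * a k := by
  have hre : ∑ k ∈ range (K+1), (-1:ℝ)^k * a k
      = a 0 - ∑ k ∈ range K, (-1:ℝ)^k * a (k+1) := by
    rw [Finset.sum_range_succ' (fun k => (-1:ℝ)^k * a k) K]
    have h1 : ∀ k ∈ range K, (-1:ℝ)^(k+1) * a (k+1) = -((-1:ℝ)^k * a (k+1)) := by
      intro k _; ring
    rw [Finset.sum_congr rfl h1, Finset.sum_neg_distrib]
    simp only [pow_zero, one_mul]; ring
  obtain ⟨h1, h2⟩ := alt_bounds K (fun k => a (k+1)) (fun k => h0 _) (fun k => hm _)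
  rw [hre]; linarith
variable {ι : Type} [DecidableEq ι]

lemma count_step (V : Finset ι) (P : Finset ι → Prop) [DecidablePred P]
    (hdown : ∀ R₁ R₂ : Finset ι, R₁ ⊆ R₂ → P R₂ → P R₁) (k : ℕ) :
    (k+1) * ((V.powerset.filter P).filter (fun R => R.card = k+1)).card ≤
      ((V.powerset.filter P).filter (fun R => R.card = k)).card * V.card := by
  classical
  set Fk1 := (V.powerset.filter P).filter (fun R => R.card = k+1) with hFk1
  set Fk := (V.powerset.filter P).filter (fun R => R.card = k) with hFk
  have hcard : (Fk1.sigma (fun R => R)).card = (k+1) * Fk1.card := by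
    rw [Finset.card_sigma]
    rw [Finset.sum_congr rfl (fun R hR => by
      simp only [hFk1, mem_filter] at hR; exact hR.2)]
    simp [mul_comm]
  have hinj : (Fk1.sigma (fun R => R)).card ≤ (Fk ×ˢ V).card := by
    apply Finset.card_le_card_of_injOn (fun x => (x.1.erase x.2, x.2))
    · intro x hx
      simp only [Finset.mem_coe, Finset.mem_sigma] at hx
      obtain ⟨hR, hv⟩ := hx
      simp only [hFk1, mem_filter, mem_powerset] at hR
      simp only [Finset.mem_coe, Finset.mem_product, hFk, mem_filter, mem_powerset]
      refine ⟨⟨⟨(Finset.erase_subset _ _).trans hR.1.1,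
        hdown _ _ (Finset.erase_subset _ _) hR.1.2⟩, ?_⟩, hR.1.1 hv⟩
      rw [Finset.card_erase_of_mem hv, hR.2]
      omega
    · intro x hx y hy hxy
      have hx : x ∈ Fk1.sigma (fun R => R) := hx
      have hy : y ∈ Fk1.sigma (fun R => R) := hy
      simp only [Finset.mem_sigma] at hx hy
      simp only [Prod.mk.injEq] at hxy
      have h2 : x.2 = y.2 := hxy.2
      have h1 : x.1 = y.1 := by
        have := hxy.1
        rw [h2] at this
        have := congrArg (insert y.2) this
        rwa [Finset.insert_erase (h2 ▸ hx.2), Finset.insert_erase hy.2] at this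
      exact Sigma.ext h1 (by rw [h2])
  rw [Finset.card_product] at hinj
  omega

lemma family_alt_bounds (V : Finset ι) (P : Finset ι → Prop) [DecidablePred P]
    (hP0 : P ∅) (hdown : ∀ R₁ R₂ : Finset ι, R₁ ⊆ R₂ → P R₂ → P R₁)
    (ρ : ℝ) (hρ : 0 ≤ ρ) (hρV : ρ * V.card ≤ 1) :
    1 - ρ * V.card ≤ ∑ R ∈ V.powerset.filter P, (-ρ)^R.card ∧
      ∑ R ∈ V.powerset.filter P, (-ρ)^R.card ≤ 1 := by
  classical
  set F := V.powerset.filter P with hF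
  set N : ℕ → ℕ := fun k => ((F.filter (fun R => R.card = k))).card with hN
  set a : ℕ → ℝ := fun k => ρ^k * (N k) with ha
  have h0 : ∀ k, 0 ≤ a k := fun k => by
    show (0:ℝ) ≤ ρ^k * (N k); positivity
  have hstep : ∀ k, (k+1) * N (k+1) ≤ N k * V.card := fun k => count_step V P hdown k
  have hm : ∀ k, a (k+1) ≤ a k := by
    intro k
    have h2 : (((k:ℝ))+1) * (N (k+1) : ℝ) ≤ (N k : ℝ) * (V.card : ℝ) := by
      exact_mod_cast hstep k
    have h1 : ((k:ℝ)+1) * a (k+1) ≤ a k * (ρ * V.card) := by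
      show ((k:ℝ)+1) * (ρ^(k+1) * (N (k+1):ℝ)) ≤ ρ^k * (N k : ℝ) * (ρ * V.card)
      calc ((k:ℝ)+1) * (ρ^(k+1) * (N (k+1):ℝ)) = ρ^k * ρ * (((k:ℝ)+1) * (N (k+1):ℝ)) := by ring
        _ ≤ ρ^k * ρ * ((N k : ℝ) * V.card) := by
            exact mul_le_mul_of_nonneg_left h2 (by positivity)
        _ = ρ^k * (N k : ℝ) * (ρ * V.card) := by ring
    have h3 : a k * (ρ * V.card) ≤ a k := by
      nlinarith [h0 k]
    have hk0 : (0:ℝ) ≤ (k:ℝ) := Nat.cast_nonneg k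
    nlinarith [h0 (k+1)]
  have hsum : ∑ R ∈ F, (-ρ)^R.card = ∑ k ∈ range (V.card + 1), (-1:ℝ)^k * a k := by
    rw [← Finset.sum_fiberwise_of_maps_to (g := fun R : Finset ι => R.card)
      (t := range (V.card + 1)) (fun R hR => by
        simp only [hF, mem_filter, mem_powerset] at hR
        exact mem_range.mpr (Nat.lt_succ_of_le (Finset.card_le_card hR.1)))]
    apply Finset.sum_congr rfl
    intro k _
    have hc : ∀ R ∈ F.filter (fun R => R.card = k), (-ρ)^R.card = (-ρ)^k := fun R hR => by
      rw [(mem_filter.mp hR).2]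
    rw [Finset.sum_congr rfl hc, Finset.sum_const, nsmul_eq_mul]
    have : a k = ρ^k * (N k : ℝ) := rfl
    rw [this, neg_pow]
    ring
  have hN0 : N 0 = 1 := by
    have h : F.filter (fun R => R.card = 0) = {∅} := by
      ext R
      simp only [mem_filter, Finset.card_eq_zero, Finset.mem_singleton, hF, mem_powerset]
      constructor
      · rintro ⟨_, h⟩; exact h
      · rintro rfl; exact ⟨⟨Finset.empty_subset _, hP0⟩, rfl⟩
    show (F.filter (fun R => R.card = 0)).card = 1
    rw [h, Finset.card_singleton]
  have ha0 : a 0 = 1 := by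
    show ρ^0 * (N 0 : ℝ) = 1
    rw [hN0]; simp
  have hN1 : (N 1 : ℝ) ≤ (V.card : ℝ) := by
    have h := hstep 0
    rw [hN0] at h
    have h01 : N (0+1) = N 1 := rfl
    rw [h01] at h
    exact_mod_cast by omega
  constructor
  · rw [hsum]
    have hl := alt_lower V.card a h0 hm
    have ha1 : a 1 ≤ ρ * V.card := by
      show ρ^1 * (N 1 : ℝ) ≤ ρ * V.card
      rw [pow_one]
      exact mul_le_mul_of_nonneg_left hN1 hρ
    rw [ha0] at hl
    linarith
  · rw [hsum]
    have hu := (alt_bounds (V.card + 1) a h0 hm).2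
    rw [ha0] at hu
    linarith
/-- "conflict or equal" relation. -/
def confl (L : ℕ) (a b : SAIdx L) : Prop :=
  a.1 = b.1 ∨ (istart L a < istart L b + treeSize L b.1 ∧ istart L b < istart L a + treeSize L a.1)

instance (L : ℕ) (a b : SAIdx L) : Decidable (confl L a b) := by unfold confl; infer_instance

lemma confl_symm {L : ℕ} {a b : SAIdx L} (h : confl L a b) : confl L b a := by
  rcases h with h | h
  · exact Or.inl h.symm
  · exact Or.inr ⟨h.2, h.1⟩

lemma cf_iff {L : ℕ} (S : Finset (SAIdx L)) :
    ConflictFree L S ↔ ∀ a ∈ S, ∀ b ∈ S, a ≠ b → ¬ confl L a b := by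
  unfold ConflictFree confl
  constructor
  · intro h a ha b hb hab
    obtain ⟨h1, h2⟩ := h a ha b hb hab
    rintro (h3 | h3)
    · exact h1 h3
    · rcases h2 with h2 | h2 <;> omega
  · intro h a ha b hb hab
    have := h a ha b hb hab
    push_neg at this
    refine ⟨this.1, ?_⟩
    by_contra hc
    push_neg at hc
    exact absurd (this.2 (by omega)) (by omega)

lemma cf_subset {L : ℕ} {S S' : Finset (SAIdx L)} (h : S' ⊆ S) (hS : ConflictFree L S) :
    ConflictFree L S' := fun a ha b hb hab => hS a (h ha) b (h hb) hab

lemma cf_empty (L : ℕ) : ConflictFree L ∅ := by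
  intro a ha; exact absurd ha (Finset.notMem_empty a)

lemma not_cf_of_confl {L : ℕ} {S : Finset (SAIdx L)} {a b : SAIdx L}
    (ha : a ∈ S) (hb : b ∈ S) (hab : a ≠ b) (h : confl L a b) : ¬ ConflictFree L S := by
  intro hS
  exact ((cf_iff S).mp hS a ha b hb hab) h

noncomputable def rho0 (L : ℕ) (ε : ℝ) : ℝ := (1 - ε / 4) / ((L : ℝ) + 1)

noncomputable def Jf (L : ℕ) (ε : ℝ) (S T : Finset (SAIdx L)) : ℝ :=
  ∑ R ∈ T.powerset.filter (fun R => ConflictFree L (S ∪ R)), (-(rho0 L ε))^R.card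

noncomputable def zf (L : ℕ) (ε : ℝ) (S T : Finset (SAIdx L)) : ℝ :=
  ∑ T' ∈ T.powerset, (-1:ℝ)^T'.card * xsol L ε (S ∪ T')

lemma zf_eq {L : ℕ} {ε : ℝ} {S T : Finset (SAIdx L)} (hd : Disjoint S T) :
    zf L ε S T = (rho0 L ε)^S.card * Jf L ε S T := by
  unfold zf Jf
  rw [Finset.mul_sum, Finset.sum_filter]
  apply Finset.sum_congr rfl
  intro T' hT'
  have hsub : T' ⊆ T := Finset.mem_powerset.mp hT'
  have hdisj : Disjoint S T' := hd.mono_right hsub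
  unfold xsol
  rw [show (1 - ε/4)/((L:ℝ)+1) = rho0 L ε from rfl]
  by_cases h : ConflictFree L (S ∪ T')
  · rw [if_pos h, if_pos h, Finset.card_union_of_disjoint hdisj, pow_add,
      ← neg_one_mul (rho0 L ε), mul_pow]
    ring
  · rw [if_neg h, if_neg h]
    ring

lemma zf_zero {L : ℕ} {ε : ℝ} {S T : Finset (SAIdx L)} (h : ¬ ConflictFree L S) :
    zf L ε S T = 0 := by
  unfold zf
  apply Finset.sum_eq_zero
  intro T' _
  have : ¬ ConflictFree L (S ∪ T') := fun hc => h (cf_subset Finset.subset_union_left hc)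
  unfold xsol
  rw [if_neg this, mul_zero]

lemma Jf_bounds {L : ℕ} {ε : ℝ} {S T : Finset (SAIdx L)} (hS : ConflictFree L S)
    (hρ : 0 ≤ rho0 L ε) (hρT : rho0 L ε * T.card ≤ 1) :
    1 - rho0 L ε * T.card ≤ Jf L ε S T ∧ Jf L ε S T ≤ 1 := by
  unfold Jf
  exact family_alt_bounds T (fun R => ConflictFree L (S ∪ R))
    (by simpa [Finset.union_empty] using hS)
    (fun R₁ R₂ hsub h => cf_subset (Finset.union_subset_union_right hsub) h)
    (rho0 L ε) hρ hρT
lemma Jf_filter_sum {L : ℕ} {ε : ℝ} (S W : Finset (SAIdx L)) :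
    Jf L ε S W = ∑ R ∈ W.powerset, (if ConflictFree L (S ∪ R) then (-(rho0 L ε))^R.card else 0) := by
  unfold Jf
  rw [Finset.sum_filter]

lemma J_union {L : ℕ} {ε : ℝ} (S : Finset (SAIdx L)) (T : Finset (SAIdx L)) :
    ∀ A : Finset (SAIdx L), (∀ v ∈ A, v ∉ T) →
    (∀ a ∈ A, ∀ b ∈ A, a ≠ b → confl L a b) →
    Jf L ε S (T ∪ A) = Jf L ε S T - rho0 L ε * ∑ v ∈ A, Jf L ε (insert v S) T := by
  intro A
  induction A using Finset.induction_on with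
  | empty => intro _ _; simp
  | @insert a A ha ih =>
    intro hAT hconf
    have haT : a ∉ T ∪ A := by
      simp only [Finset.mem_union]
      rintro (h | h)
      · exact hAT a (Finset.mem_insert_self a A) h
      · exact ha h
    have hTA : T ∪ insert a A = insert a (T ∪ A) := by
      rw [Finset.union_insert]
    rw [hTA, Jf_filter_sum, Finset.sum_powerset_insert haT]
    have hfst : ∑ R ∈ (T ∪ A).powerset, (if ConflictFree L (S ∪ R) then (-(rho0 L ε))^R.card else 0)
        = Jf L ε S (T ∪ A) := (Jf_filter_sum S (T ∪ A)).symm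
    have hsnd : ∑ R ∈ (T ∪ A).powerset,
        (if ConflictFree L (S ∪ insert a R) then (-(rho0 L ε))^(insert a R).card else 0)
        = -(rho0 L ε) * Jf L ε (insert a S) T := by
      rw [← Finset.sum_subset (Finset.powerset_mono.mpr Finset.subset_union_left : T.powerset ⊆ (T ∪ A).powerset)]
      · rw [Jf_filter_sum, Finset.mul_sum]
        apply Finset.sum_congr rfl
        intro R hR
        have hRT : R ⊆ T := Finset.mem_powerset.mp hR
        have haR : a ∉ R := fun h => hAT a (Finset.mem_insert_self a A) (hRT h)
        have hset : S ∪ insert a R = insert a S ∪ R := by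
          rw [Finset.union_insert, Finset.insert_union]
        rw [hset, Finset.card_insert_of_notMem haR]
        by_cases h : ConflictFree L (insert a S ∪ R)
        · rw [if_pos h, if_pos h, pow_succ]
          ring
        · rw [if_neg h, if_neg h, mul_zero]
      · intro R hR hRT
        have hRTA : R ⊆ T ∪ A := Finset.mem_powerset.mp hR
        have : ∃ v ∈ R, v ∈ A := by
          by_contra hc
          push_neg at hc
          exact hRT (Finset.mem_powerset.mpr (fun x hx => by
            rcases Finset.mem_union.mp (hRTA hx) with h | h
            · exact h
            · exact absurd h (hc x hx)))
        obtain ⟨v, hvR, hvA⟩ := this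
        have hav : a ≠ v := fun h => ha (h ▸ hvA)
        have hconfav : confl L a v :=
          hconf a (Finset.mem_insert_self a A) v (Finset.mem_insert_of_mem hvA) hav
        have hnotcf : ¬ ConflictFree L (S ∪ insert a R) := by
          apply not_cf_of_confl (a := a) (b := v) _ _ hav hconfav
          · exact Finset.mem_union_right _ (Finset.mem_insert_self a R)
          · exact Finset.mem_union_right _ (Finset.mem_insert_of_mem hvR)
        rw [if_neg hnotcf]
    rw [hfst, hsnd, ih (fun v hv => hAT v (Finset.mem_insert_of_mem hv))
      (fun x hx y hy hxy => hconf x (Finset.mem_insert_of_mem hx) y (Finset.mem_insert_of_mem hy) hxy)]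
    rw [Finset.sum_insert ha]
    ring
lemma inner_mem {L : ℕ} {ε : ℝ} (S T : Finset (SAIdx L)) (v : SAIdx L) (hv : v ∈ S) :
    ∑ T' ∈ T.powerset, (-1:ℝ)^T'.card * xsol L ε (insert v (S ∪ T')) = zf L ε S T := by
  unfold zf
  apply Finset.sum_congr rfl
  intro T' _
  rw [Finset.insert_eq_self.mpr (Finset.mem_union_left _ hv)]

lemma inner_T {L : ℕ} {ε : ℝ} (S T : Finset (SAIdx L)) (v : SAIdx L) (hv : v ∈ T) :
    ∑ T' ∈ T.powerset, (-1:ℝ)^T'.card * xsol L ε (insert v (S ∪ T')) = 0 := by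
  have hT : T = insert v (T.erase v) := (Finset.insert_erase hv).symm
  rw [hT, Finset.sum_powerset_insert (Finset.notMem_erase v T)]
  rw [← Finset.sum_add_distrib]
  apply Finset.sum_eq_zero
  intro T' hT'
  have hvT' : v ∉ T' := fun h => Finset.notMem_erase v T (Finset.mem_powerset.mp hT' h)
  have h1 : insert v (S ∪ insert v T') = insert v (S ∪ T') := by
    rw [Finset.union_insert, Finset.insert_idem]
  rw [h1, Finset.card_insert_of_notMem hvT', pow_succ]
  ring

lemma inner_rest {L : ℕ} {ε : ℝ} (S T : Finset (SAIdx L)) (v : SAIdx L) :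
    ∑ T' ∈ T.powerset, (-1:ℝ)^T'.card * xsol L ε (insert v (S ∪ T')) = zf L ε (insert v S) T := by
  unfold zf
  apply Finset.sum_congr rfl
  intro T' _
  rw [Finset.insert_union]

lemma Fsplit {L : ℕ} {ε : ℝ} (c : SAIdx L → ℝ) (dd : ℝ) (S T : Finset (SAIdx L))
    (hd : Disjoint S T) :
    ∑ T' ∈ T.powerset, (-1 : ℝ) ^ T'.card *
      ((∑ v, c v * xsol L ε (insert v (S ∪ T'))) - dd * xsol L ε (S ∪ T'))
    = (∑ v ∈ S, c v - dd) * zf L ε S T + ∑ v ∈ Sᶜ \ T, c v * zf L ε (insert v S) T := by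
  have e1 : ∀ T' ∈ T.powerset, (-1:ℝ)^T'.card *
      ((∑ v, c v * xsol L ε (insert v (S ∪ T'))) - dd * xsol L ε (S ∪ T'))
      = (∑ v, c v * ((-1:ℝ)^T'.card * xsol L ε (insert v (S ∪ T'))))
        - dd * ((-1:ℝ)^T'.card * xsol L ε (S ∪ T')) := by
    intro T' _
    rw [mul_sub, Finset.mul_sum]
    congr 1
    · apply Finset.sum_congr rfl; intro v _; ring
    · ring
  rw [Finset.sum_congr rfl e1, Finset.sum_sub_distrib, ← Finset.mul_sum, Finset.sum_comm]
  have e2 : ∀ v : SAIdx L, ∑ T' ∈ T.powerset, c v * ((-1:ℝ)^T'.card * xsol L ε (insert v (S ∪ T')))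
      = c v * ∑ T' ∈ T.powerset, (-1:ℝ)^T'.card * xsol L ε (insert v (S ∪ T')) := by
    intro v; rw [Finset.mul_sum]
  rw [Finset.sum_congr rfl (fun v _ => e2 v)]
  have hzf : ∑ T' ∈ T.powerset, (-1:ℝ)^T'.card * xsol L ε (S ∪ T') = zf L ε S T := rfl
  rw [hzf]
  rw [← Finset.sum_add_sum_compl S (fun v => c v * ∑ T' ∈ T.powerset, (-1:ℝ)^T'.card * xsol L ε (insert v (S ∪ T')))]
  have hTsub : T ⊆ Sᶜ := by
    intro v hv
    simp only [Finset.mem_compl]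
    exact fun hvS => (Finset.disjoint_left.mp hd) hvS hv
  rw [← Finset.sum_sdiff hTsub]
  have eS : ∑ v ∈ S, c v * ∑ T' ∈ T.powerset, (-1:ℝ)^T'.card * xsol L ε (insert v (S ∪ T'))
      = (∑ v ∈ S, c v) * zf L ε S T := by
    rw [Finset.sum_mul]
    apply Finset.sum_congr rfl
    intro v hv
    rw [inner_mem S T v hv]
  have eT : ∑ v ∈ T, c v * ∑ T' ∈ T.powerset, (-1:ℝ)^T'.card * xsol L ε (insert v (S ∪ T')) = 0 := by
    apply Finset.sum_eq_zero
    intro v hv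
    rw [inner_T S T v hv, mul_zero]
  have eR : ∑ v ∈ Sᶜ \ T, c v * ∑ T' ∈ T.powerset, (-1:ℝ)^T'.card * xsol L ε (insert v (S ∪ T'))
      = ∑ v ∈ Sᶜ \ T, c v * zf L ε (insert v S) T := by
    apply Finset.sum_congr rfl
    intro v _
    rw [inner_rest S T v]
  rw [eS, eT, eR]
  ring
lemma numfacts (L : ℕ) (ε : ℝ) (hε0 : 0 < ε) (hε1 : ε ≤ 1)
    (S T : Finset (SAIdx L)) (hcard : S.card + T.card + 1 ≤ ⌊(ε / 4) * ((L : ℝ) + 1)⌋₊) :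
    0 ≤ rho0 L ε ∧ (S.card : ℝ) + T.card + 1 ≤ (ε/4) * ((L:ℝ)+1) ∧
      rho0 L ε * T.card ≤ ε/4 ∧ 1 ≤ (ε/4) * ((L:ℝ)+1) := by
  have hΛ : (1:ℝ) ≤ (L:ℝ) + 1 := by have := Nat.cast_nonneg (α := ℝ) L; linarith
  have hΛ0 : (0:ℝ) < (L:ℝ) + 1 := by positivity
  have hE1 : ε/4 ≤ 1/4 := by linarith
  have hρ : 0 ≤ rho0 L ε := by
    unfold rho0
    apply div_nonneg (by linarith) (by positivity)
  have hfl : (⌊(ε / 4) * ((L : ℝ) + 1)⌋₊ : ℝ) ≤ (ε/4) * ((L:ℝ)+1) :=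
    Nat.floor_le (by positivity)
  have hc : (S.card : ℝ) + T.card + 1 ≤ (ε/4) * ((L:ℝ)+1) := by
    have := hcard
    have h2 : ((S.card + T.card + 1 : ℕ) : ℝ) ≤ (⌊(ε / 4) * ((L : ℝ) + 1)⌋₊ : ℝ) := by
      exact_mod_cast this
    push_cast at h2
    linarith
  refine ⟨hρ, hc, ?_, ?_⟩
  · have hT : (T.card : ℝ) ≤ (ε/4)*((L:ℝ)+1) - 1 := by
      have : (0:ℝ) ≤ S.card := Nat.cast_nonneg _
      linarith
    unfold rho0
    rw [div_mul_eq_mul_div, div_le_iff₀ hΛ0]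
    have h1 : (1 - ε/4) * (T.card:ℝ) ≤ (T.card:ℝ) := by
      nlinarith [Nat.cast_nonneg (α := ℝ) T.card]
    have h2 : (T.card : ℝ) ≤ ε / 4 * ((L:ℝ)+1) := by linarith
    calc (1 - ε/4) * (T.card:ℝ) ≤ (T.card:ℝ) := h1
      _ ≤ ε / 4 * ((L:ℝ) + 1) := h2
  · have : (0:ℝ) ≤ (S.card:ℝ) + T.card := by positivity
    linarith

lemma zf_nonneg {L : ℕ} {ε : ℝ} {S T : Finset (SAIdx L)} (hd : Disjoint S T)
    (hρ : 0 ≤ rho0 L ε) (hρT : rho0 L ε * T.card ≤ 1) : 0 ≤ zf L ε S T := by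
  by_cases hS : ConflictFree L S
  · rw [zf_eq hd]
    apply mul_nonneg (by positivity)
    have := (Jf_bounds hS hρ hρT).1
    linarith
  · rw [zf_zero hS]

lemma row5 (L : ℕ) (ε : ℝ) (hε0 : 0 < ε) (hε1 : ε ≤ 1) (v₀ : SAIdx L) :
    SArowI (SAIdx L) ⌊(ε / 4) * ((L : ℝ) + 1)⌋₊
      (fun v => if v = v₀ then -1 else 0) 0 (xsol L ε) := by
  intro S T hd hcard
  obtain ⟨hρ, hc, hρT, hEΛ⟩ := numfacts L ε hε0 hε1 S T hcard
  have hρT1 : rho0 L ε * T.card ≤ 1 := by linarith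
  rw [show (∑ T' ∈ T.powerset, (-1 : ℝ) ^ T'.card *
      ((∑ v, (if v = v₀ then (-1:ℝ) else 0) * xsol L ε (insert v (S ∪ T'))) -
        0 * xsol L ε (S ∪ T'))) = _ from Fsplit _ 0 S T hd]
  have h1 : (∑ v ∈ S, (if v = v₀ then (-1:ℝ) else 0)) - 0 ≤ 0 := by
    rw [sub_zero]
    apply Finset.sum_nonpos
    intro v _
    split <;> norm_num
  have h2 : 0 ≤ zf L ε S T := zf_nonneg hd hρ hρT1
  have h3 : ∑ v ∈ Sᶜ \ T, (if v = v₀ then (-1:ℝ) else 0) * zf L ε (insert v S) T ≤ 0 := by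
    apply Finset.sum_nonpos
    intro v hv
    have hvT : v ∉ T := (Finset.mem_sdiff.mp hv).2
    have hd' : Disjoint (insert v S) T := by
      rw [Finset.disjoint_left]
      intro a ha
      rcases Finset.mem_insert.mp ha with rfl | ha
      · exact hvT
      · exact Finset.disjoint_left.mp hd ha
    have := zf_nonneg hd' hρ hρT1
    split <;> nlinarith
  nlinarith [mul_nonpos_of_nonpos_of_nonneg h1 h2]
lemma row34 (L : ℕ) (ε : ℝ) (hε0 : 0 < ε) (hε1 : ε ≤ 1)
    (Pv : SAIdx L → Prop) [DecidablePred Pv]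
    (hconf : ∀ a b : SAIdx L, Pv a → Pv b → a ≠ b → confl L a b)
    (hcardP : (Finset.univ.filter Pv).card ≤ L + 1) :
    SArowI (SAIdx L) ⌊(ε / 4) * ((L : ℝ) + 1)⌋₊
      (fun v => if Pv v then 1 else 0) 1 (xsol L ε) := by
  intro S T hd hcard
  obtain ⟨hρ, hc, hρT, hEΛ⟩ := numfacts L ε hε0 hε1 S T hcard
  have hΛ0 : (0:ℝ) < (L:ℝ) + 1 := by positivity
  have hρT1 : rho0 L ε * T.card ≤ 1 := by linarith
  rw [show (∑ T' ∈ T.powerset, (-1 : ℝ) ^ T'.card *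
      ((∑ v, (if Pv v then (1:ℝ) else 0) * xsol L ε (insert v (S ∪ T'))) -
        1 * xsol L ε (S ∪ T'))) = _ from Fsplit _ 1 S T hd]
  by_cases hS : ConflictFree L S
  case neg =>
    rw [zf_zero hS]
    have h2 : ∑ v ∈ Sᶜ \ T, (if Pv v then (1:ℝ) else 0) * zf L ε (insert v S) T = 0 := by
      apply Finset.sum_eq_zero
      intro v _
      rw [zf_zero (fun hcf => hS (cf_subset (Finset.subset_insert v S) hcf)), mul_zero]
    rw [h2]
    simp
  case pos =>
  have hsumS : ∑ v ∈ S, (if Pv v then (1:ℝ) else 0) = ((S.filter Pv).card : ℝ) := by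
    rw [Finset.sum_ite, Finset.sum_const, Finset.sum_const]
    simp
  have hsumR : ∑ v ∈ Sᶜ \ T, (if Pv v then (1:ℝ) else 0) * zf L ε (insert v S) T
      = ∑ v ∈ (Sᶜ \ T).filter Pv, zf L ε (insert v S) T := by
    rw [Finset.sum_filter]
    apply Finset.sum_congr rfl
    intro v _
    split <;> simp
  rw [hsumS, hsumR]
  set A' := (Sᶜ \ T).filter Pv with hA'
  have hk1 : (S.filter Pv).card ≤ 1 := by
    rw [Finset.card_le_one]
    intro a ha b hb
    by_contra hab
    exact (cf_iff S).mp hS a (Finset.mem_filter.mp ha).1 b (Finset.mem_filter.mp hb).1 hab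
      (hconf a b (Finset.mem_filter.mp ha).2 (Finset.mem_filter.mp hb).2 hab)
  rcases Nat.eq_zero_or_pos (S.filter Pv).card with hk | hk
  case inr =>
    -- k = 1 : every v ∈ A' makes insert v S conflicted.
    obtain ⟨u, hu⟩ := Finset.card_pos.mp hk
    have hu' := Finset.mem_filter.mp hu
    have hz : ∑ v ∈ A', zf L ε (insert v S) T = 0 := by
      apply Finset.sum_eq_zero
      intro v hv
      have hv' := Finset.mem_filter.mp hv
      have hvS : v ∉ S := by
        have := (Finset.mem_sdiff.mp hv'.1).1
        simpa using this
      have hvu : v ≠ u := fun h => hvS (h ▸ hu'.1)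
      apply zf_zero
      apply not_cf_of_confl (a := v) (b := u) (Finset.mem_insert_self v S)
        (Finset.mem_insert_of_mem hu'.1) hvu
      exact hconf v u hv'.2 hu'.2 hvu
    rw [hz]
    have hk' : (S.filter Pv).card = 1 := le_antisymm hk1 hk
    rw [hk']
    have := zf_nonneg hd hρ hρT1
    norm_num
  case inl =>
    rw [hk]
    -- main case
    have hA'T : ∀ v ∈ A', v ∉ T := fun v hv => (Finset.mem_sdiff.mp (Finset.mem_filter.mp hv).1).2
    have hA'conf : ∀ a ∈ A', ∀ b ∈ A', a ≠ b → confl L a b := fun a ha b hb hab =>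
      hconf a b (Finset.mem_filter.mp ha).2 (Finset.mem_filter.mp hb).2 hab
    have hJU := J_union (ε := ε) S T A' hA'T hA'conf
    have hzv : ∀ v ∈ A', zf L ε (insert v S) T
        = rho0 L ε ^ (S.card + 1) * Jf L ε (insert v S) T := by
      intro v hv
      have hv' := Finset.mem_filter.mp hv
      have hvS : v ∉ S := by
        have := (Finset.mem_sdiff.mp hv'.1).1
        simpa using this
      have hvT := hA'T v hv
      have hd' : Disjoint (insert v S) T := by
        rw [Finset.disjoint_left]
        intro a ha
        rcases Finset.mem_insert.mp ha with rfl | ha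
        · exact hvT
        · exact Finset.disjoint_left.mp hd ha
      rw [zf_eq hd', Finset.card_insert_of_notMem hvS]
    rw [Finset.sum_congr rfl hzv, ← Finset.mul_sum, zf_eq hd]
    -- goal: (0 - 1) * (ρ^s * J S T) + ρ^(s+1) * Σ J_v ≤ 0
    have hsub : rho0 L ε * ∑ v ∈ A', Jf L ε (insert v S) T
        = Jf L ε S T - Jf L ε S (T ∪ A') := by
      rw [hJU]; ring
    have hcardA' : (A'.card : ℝ) ≤ (L:ℝ) + 1 := by
      have h1 : A' ⊆ Finset.univ.filter Pv := by
        intro v hv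
        exact Finset.mem_filter.mpr ⟨Finset.mem_univ v, (Finset.mem_filter.mp hv).2⟩
      have h2 : A'.card ≤ L + 1 := (Finset.card_le_card h1).trans hcardP
      exact_mod_cast h2
    have hρTA : rho0 L ε * ((T ∪ A').card : ℝ) ≤ 1 := by
      have h1 : ((T ∪ A').card : ℝ) ≤ (T.card : ℝ) + A'.card := by
        exact_mod_cast Finset.card_union_le T A'
      have h2 : rho0 L ε * ((T ∪ A').card : ℝ) ≤ rho0 L ε * ((T.card:ℝ) + A'.card) :=
        mul_le_mul_of_nonneg_left h1 hρ
      have h3 : rho0 L ε * ((L:ℝ)+1) = 1 - ε/4 := by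
        unfold rho0
        field_simp
      nlinarith [mul_le_mul_of_nonneg_left hcardA' hρ]
    have hJ2 := (Jf_bounds (T := T ∪ A') hS hρ hρTA).1
    have hJ2' : 0 ≤ Jf L ε S (T ∪ A') := by linarith
    have hpow : (0:ℝ) ≤ rho0 L ε ^ S.card := by positivity
    have hfin : rho0 L ε ^ (S.card + 1) * ∑ v ∈ A', Jf L ε (insert v S) T
        = rho0 L ε ^ S.card * (Jf L ε S T - Jf L ε S (T ∪ A')) := by
      rw [← hsub, pow_succ]
      ring
    rw [hfin]
    push_cast
    nlinarith [mul_nonneg hpow hJ2']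
lemma istart_eq (L : ℕ) (v : SAIdx L) :
    istart L v = ((L+1) * (v.1.2 : ℕ) + (v.2 : ℕ)) * 2^(L - (v.1.1 : ℕ)) := by
  unfold istart treeRel treeSize
  ring

lemma decomp_unique {Λ k₁ a₁ k₂ a₂ : ℕ} (h₁ : a₁ < Λ) (h₂ : a₂ < Λ)
    (h : Λ*k₁+a₁ = Λ*k₂+a₂) : k₁ = k₂ ∧ a₁ = a₂ := by
  have hΛ : 0 < Λ := Nat.pos_of_ne_zero (fun hh => by omega)
  have hk : k₁ = k₂ := by
    have e1 : (Λ*k₁+a₁)/Λ = k₁ := by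
      rw [Nat.mul_add_div hΛ, Nat.div_eq_of_lt h₁]; omega
    have e2 : (Λ*k₂+a₂)/Λ = k₂ := by
      rw [Nat.mul_add_div hΛ, Nat.div_eq_of_lt h₂]; omega
    rw [← e1, ← e2, h]
  refine ⟨hk, ?_⟩
  rw [hk] at h
  exact Nat.add_left_cancel h

lemma cover_level_inj (L : ℕ) (t' : ℕ) (v w : SAIdx L)
    (hv : istart L v < t' ∧ t' ≤ istart L v + treeSize L v.1)
    (hw : istart L w < t' ∧ t' ≤ istart L w + treeSize L w.1)
    (hll : v.1.1 = w.1.1) : v = w := by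
  obtain ⟨⟨ℓ₁, k₁⟩, a₁⟩ := v
  obtain ⟨⟨ℓ₂, k₂⟩, a₂⟩ := w
  simp only at hll
  subst hll
  set p := 2^(L - (ℓ₁ : ℕ)) with hp
  have hp0 : 0 < p := Nat.pow_pos (by norm_num : 0 < 2)
  simp only [istart_eq] at hv hw
  simp only [treeSize] at hv hw
  set m₁ := (L+1) * (k₁ : ℕ) + (a₁ : ℕ) with hm₁
  set m₂ := (L+1) * (k₂ : ℕ) + (a₂ : ℕ) with hm₂
  have hv1 : m₁ * p < t' := (istart_eq L _).symm.trans_lt hv.1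
  have hv2 : t' ≤ m₁ * p + p := hv.2.trans_eq (congrArg (· + p) (istart_eq L _))
  have hw1 : m₂ * p < t' := (istart_eq L _).symm.trans_lt hw.1
  have hw2 : t' ≤ m₂ * p + p := hw.2.trans_eq (congrArg (· + p) (istart_eq L _))
  have hm : m₁ = m₂ := by
    have l1 : m₁ * p < (m₂ + 1) * p := by
      calc m₁ * p < t' := hv1
        _ ≤ m₂ * p + p := hw2
        _ = (m₂ + 1) * p := by ring
    have l2 : m₂ * p < (m₁ + 1) * p := by
      calc m₂ * p < t' := hw1
        _ ≤ m₁ * p + p := hv2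
        _ = (m₁ + 1) * p := by ring
    have l1' : m₁ < m₂ + 1 := Nat.lt_of_mul_lt_mul_right l1
    have l2' : m₂ < m₁ + 1 := Nat.lt_of_mul_lt_mul_right l2
    omega
  obtain ⟨hk, ha⟩ := decomp_unique (a₁.isLt) (a₂.isLt) hm
  have hkk : k₁ = k₂ := Fin.ext hk
  have haa : a₁ = a₂ := Fin.ext ha
  subst hkk; subst haa
  rfl

lemma row3 (L : ℕ) (ε : ℝ) (hε0 : 0 < ε) (hε1 : ε ≤ 1) (j₀ : TreeJob L) :
    SArowI (SAIdx L) ⌊(ε / 4) * ((L : ℝ) + 1)⌋₊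
      (fun v => if v.1 = j₀ then 1 else 0) 1 (xsol L ε) := by
  apply row34 L ε hε0 hε1 (fun v => v.1 = j₀)
  · intro a b ha hb hab
    exact Or.inl (ha.trans hb.symm)
  · have h := Finset.card_le_card_of_injOn (fun v : SAIdx L => v.2)
      (fun v _ => Finset.mem_univ (α := Fin (L+1)) v.2) (s := Finset.univ.filter (fun v : SAIdx L => v.1 = j₀))
      (by
        intro v hv w hw hvw
        have hv' : v.1 = j₀ := by
          have : v ∈ Finset.univ.filter (fun v : SAIdx L => v.1 = j₀) := hv
          exact (Finset.mem_filter.mp this).2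
        have hw' : w.1 = j₀ := by
          have : w ∈ Finset.univ.filter (fun v : SAIdx L => v.1 = j₀) := hw
          exact (Finset.mem_filter.mp this).2
        exact Prod.ext (hv'.trans hw'.symm) hvw)
    simpa using h

lemma row4 (L : ℕ) (ε : ℝ) (hε0 : 0 < ε) (hε1 : ε ≤ 1) (t' : ℕ) :
    SArowI (SAIdx L) ⌊(ε / 4) * ((L : ℝ) + 1)⌋₊
      (fun v => if istart L v < t' ∧ t' ≤ istart L v + treeSize L v.1 then 1 else 0) 1
      (xsol L ε) := by
  apply row34 L ε hε0 hε1 (fun v => istart L v < t' ∧ t' ≤ istart L v + treeSize L v.1)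
  · intro a b ha hb hab
    right
    constructor
    · calc istart L a < t' := ha.1
        _ ≤ istart L b + treeSize L b.1 := hb.2
    · calc istart L b < t' := hb.1
        _ ≤ istart L a + treeSize L a.1 := ha.2
  · have h := Finset.card_le_card_of_injOn (fun v : SAIdx L => v.1.1)
      (fun v _ => Finset.mem_univ (α := Fin (L+1)) v.1.1)
      (s := Finset.univ.filter (fun v : SAIdx L =>
        istart L v < t' ∧ t' ≤ istart L v + treeSize L v.1))
      (by
        intro v hv w hw hvw
        have hv' : istart L v < t' ∧ t' ≤ istart L v + treeSize L v.1 := by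
          have : v ∈ Finset.univ.filter (fun v : SAIdx L =>
            istart L v < t' ∧ t' ≤ istart L v + treeSize L v.1) := hv
          exact (Finset.mem_filter.mp this).2
        have hw' : istart L w < t' ∧ t' ≤ istart L w + treeSize L w.1 := by
          have : w ∈ Finset.univ.filter (fun v : SAIdx L =>
            istart L v < t' ∧ t' ≤ istart L v + treeSize L v.1) := hw
          exact (Finset.mem_filter.mp this).2
        exact cover_level_inj L t' v w hv' hw' hvw)
    simpa using h
lemma sum_pow2 (n : ℕ) : ∑ i ∈ Finset.range n, 2^i = 2^n - 1 := by
  induction n with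
  | zero => simp
  | succ n ih =>
    rw [Finset.sum_range_succ, ih]
    have : 1 ≤ 2^n := Nat.one_le_two_pow
    omega

lemma nat_div_add (x y p : ℕ) : (x+y)/p ≤ x/p + y/p + 1 := by
  rcases Nat.eq_zero_or_pos p with hp | hp
  · simp [hp]
  · have hx : x < p * (x/p) + p := by
      conv_lhs => rw [← Nat.div_add_mod x p]
      exact Nat.add_lt_add_left (Nat.mod_lt x hp) _
    have hy : y < p * (y/p) + p := by
      conv_lhs => rw [← Nat.div_add_mod y p]
      exact Nat.add_lt_add_left (Nat.mod_lt y hp) _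
    have hsum : x + y < p * (x/p + y/p + 2) := by
      calc x + y < (p*(x/p) + p) + (p*(y/p) + p) := Nat.add_lt_add hx hy
        _ = p * (x/p + y/p + 2) := by ring
    have := Nat.div_lt_of_lt_mul hsum
    omega

lemma totalmass (L : ℕ) : ∑ v : SAIdx L, treeSize L v.1 = (L+1)*((L+1)*2^L) := by
  rw [show (∑ v : SAIdx L, treeSize L v.1) = ∑ j : TreeJob L, ∑ a : Fin (L+1), treeSize L ((j, a) : SAIdx L).1
    from Fintype.sum_prod_type _]
  have h1 : ∀ j : TreeJob L, (∑ a : Fin (L+1), treeSize L ((j, a) : SAIdx L).1) = (L+1) * treeSize L j := by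
    intro j
    calc (∑ a : Fin (L+1), treeSize L ((j, a) : SAIdx L).1)
        = ∑ _a : Fin (L+1), treeSize L j := Finset.sum_congr rfl (fun a _ => rfl)
      _ = (L+1) * treeSize L j := by
          rw [Finset.sum_const, Finset.card_univ, Fintype.card_fin, smul_eq_mul]
  rw [Finset.sum_congr rfl (fun j _ => h1 j), ← Finset.mul_sum]
  congr 1
  have h2 : (∑ j : TreeJob L, treeSize L j) = ∑ ℓ : Fin (L+1), ∑ k : Fin (2^(ℓ:ℕ)), treeSize L ⟨ℓ, k⟩ :=
    Finset.sum_sigma univ (fun _ => univ) _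
  rw [h2]
  have h2' : ∀ ℓ : Fin (L+1), (∑ k : Fin (2^(ℓ:ℕ)), treeSize L ⟨ℓ, k⟩) = ∑ _k : Fin (2^(ℓ:ℕ)), 2^(L - (ℓ:ℕ)) := by
    intro ℓ
    exact Finset.sum_congr rfl (fun k _ => rfl)
  rw [Finset.sum_congr rfl (fun ℓ _ => h2' ℓ)]
  have h3 : ∀ ℓ : Fin (L+1), (∑ _k : Fin (2^(ℓ:ℕ)), 2^(L - (ℓ:ℕ))) = 2^L := by
    intro ℓ
    rw [Finset.sum_const, Finset.card_univ, Fintype.card_fin, smul_eq_mul, ← pow_add]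
    congr 1
    have := ℓ.isLt
    omega
  rw [Finset.sum_congr rfl (fun ℓ _ => h3 ℓ), Finset.sum_const, Finset.card_univ,
    Fintype.card_fin, smul_eq_mul]

lemma level_inj {L : ℕ} (v w : SAIdx L) (hll : v.1.1 = w.1.1) (his : istart L v = istart L w) :
    v = w := by
  obtain ⟨⟨ℓ₁, k₁⟩, a₁⟩ := v
  obtain ⟨⟨ℓ₂, k₂⟩, a₂⟩ := w
  simp only at hll
  subst hll
  have his := (istart_eq L _).symm.trans (his.trans (istart_eq L _))
  simp only at his
  have hp0 : 0 < 2^(L - (ℓ₁:ℕ)) := Nat.pow_pos (by norm_num : 0 < 2)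
  have hm := Nat.eq_of_mul_eq_mul_right hp0 his
  obtain ⟨hk, ha⟩ := decomp_unique (a₁.isLt) (a₂.isLt) hm
  have hkk : k₁ = k₂ := Fin.ext hk
  have haa : a₁ = a₂ := Fin.ext ha
  subst hkk; subst haa
  rfl

/-- the scheduled intervals of `v` and `u` overlap -/
def iov (L : ℕ) (v u : SAIdx L) : Prop :=
  istart L v < istart L u + treeSize L u.1 ∧ istart L u < istart L v + treeSize L v.1

instance (L : ℕ) (v u : SAIdx L) : Decidable (iov L v u) := by unfold iov; infer_instance

lemma level_count {L : ℕ} (u : SAIdx L) (ℓ : Fin (L+1)) (G : Finset (SAIdx L))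
    (hG : ∀ v ∈ G, v.1.1 = ℓ ∧ iov L v u) :
    G.card ≤ (treeSize L u.1 - 1)/2^(L - (ℓ:ℕ)) + 2 := by
  set p := 2^(L - (ℓ:ℕ)) with hp
  set P := treeSize L u.1 with hP
  have hp0 : 0 < p := Nat.pow_pos (by norm_num : 0 < 2)
  have hP0 : 0 < P := Nat.pow_pos (by norm_num : 0 < 2)
  have key : ∀ v ∈ G, istart L u / p ≤ istart L v / p ∧
      istart L v / p ≤ istart L u / p + ((P-1)/p + 1) := by
    intro v hv
    obtain ⟨hlev, hov⟩ := hG v hv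
    have hexp : (L - ((v.1.1):ℕ)) = (L - (ℓ:ℕ)) := by rw [hlev]
    have hsz : treeSize L v.1 = p := by
      unfold treeSize
      rw [hexp]
    have hdvd : p ∣ istart L v := by
      rw [istart_eq, hexp]
      exact dvd_mul_left _ _
    constructor
    · -- istart u < istart v + p
      have h1 : istart L u < istart L v + p := by
        rw [← hsz]; exact hov.2
      have h2 : istart L u / p < istart L v / p + 1 := by
        apply Nat.div_lt_of_lt_mul
        calc istart L u < istart L v + p := h1
          _ = p * (istart L v / p) + p := by rw [Nat.mul_div_cancel' hdvd]
          _ = p * (istart L v / p + 1) := by ring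
      omega
    · have h1 : istart L v < istart L u + P := hov.1
      have h2 : istart L v ≤ istart L u + (P - 1) := by omega
      calc istart L v / p ≤ (istart L u + (P-1)) / p := Nat.div_le_div_right h2
        _ ≤ istart L u / p + (P-1)/p + 1 := nat_div_add _ _ _
        _ = istart L u / p + ((P-1)/p + 1) := by ring
  have hinj : G.card ≤ (Finset.range ((P-1)/p + 2)).card := by
    apply Finset.card_le_card_of_injOn (fun v => istart L v / p - istart L u / p)
    · intro v hv
      obtain ⟨h1, h2⟩ := key v hv
      simp only [Finset.mem_coe, Finset.mem_range]
      omega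
    · intro v hv w hw hvw
      have hv' : v ∈ G := hv
      have hw' : w ∈ G := hw
      have hv1 := key v hv'
      have hw1 := key w hw'
      simp only at hvw
      have hdd : istart L v / p = istart L w / p := by omega
      have hdv : p ∣ istart L v := by
        rw [istart_eq, show (L - ((v.1.1):ℕ)) = (L - (ℓ:ℕ)) from by rw [(hG v hv').1]]
        exact dvd_mul_left _ _
      have hdw : p ∣ istart L w := by
        rw [istart_eq, show (L - ((w.1.1):ℕ)) = (L - (ℓ:ℕ)) from by rw [(hG w hw').1]]
        exact dvd_mul_left _ _
      have heq : istart L v = istart L w := by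
        have e1 := Nat.div_mul_cancel hdv
        have e2 := Nat.div_mul_cancel hdw
        rw [← e1, ← e2, hdd]
      exact level_inj v w (((hG v hv').1).trans ((hG w hw').1).symm) heq
  rwa [Finset.card_range] at hinj
lemma sum_union_le' {α : Type} [DecidableEq α] (s t : Finset α) (f : α → ℕ) :
    ∑ x ∈ s ∪ t, f x ≤ ∑ x ∈ s, f x + ∑ x ∈ t, f x := by
  have := Finset.sum_union_inter (s₁ := s) (s₂ := t) (f := f)
  omega

lemma sum_biUnion_le' {α β : Type} [DecidableEq α] [DecidableEq β]
    (s : Finset α) (t : α → Finset β) (f : β → ℕ) :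
    ∑ x ∈ s.biUnion t, f x ≤ ∑ i ∈ s, ∑ x ∈ t i, f x := by
  induction s using Finset.induction_on with
  | empty => simp
  | @insert a s ha ih =>
    rw [Finset.biUnion_insert, Finset.sum_insert ha]
    calc ∑ x ∈ t a ∪ s.biUnion t, f x ≤ ∑ x ∈ t a, f x + ∑ x ∈ s.biUnion t, f x :=
          sum_union_le' _ _ _
      _ ≤ ∑ x ∈ t a, f x + ∑ i ∈ s, ∑ x ∈ t i, f x := by omega

lemma card_samejob_le (L : ℕ) (j₀ : TreeJob L) (G : Finset (SAIdx L))
    (hG : ∀ v ∈ G, v.1 = j₀) : G.card ≤ L + 1 := by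
  have h := Finset.card_le_card_of_injOn (fun v : SAIdx L => v.2)
    (fun v _ => Finset.mem_univ (α := Fin (L+1)) v.2) (s := G)
    (by
      intro v hv w hw hvw
      have hv' : v ∈ G := hv
      have hw' : w ∈ G := hw
      exact Prod.ext ((hG v hv').trans (hG w hw').symm) hvw)
  simpa using h

lemma CB_bound (L : ℕ) (u : SAIdx L) :
    ∑ v ∈ Finset.univ.filter (fun v : SAIdx L => confl L v u), treeSize L v.1
      ≤ (2*(L+1)+4)*2^L := by
  have hsplit : Finset.univ.filter (fun v : SAIdx L => confl L v u)
      = Finset.univ.filter (fun v : SAIdx L => v.1 = u.1) ∪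
        Finset.univ.filter (fun v : SAIdx L => iov L v u) := by
    rw [← Finset.filter_or]
    rfl
  rw [hsplit]
  have h1 : ∑ v ∈ Finset.univ.filter (fun v : SAIdx L => v.1 = u.1), treeSize L v.1
      ≤ (L+1)*2^L := by
    have hb : ∀ v ∈ Finset.univ.filter (fun v : SAIdx L => v.1 = u.1), treeSize L v.1 ≤ 2^L := by
      intro v _
      unfold treeSize
      exact Nat.pow_le_pow_right (by norm_num) (by omega)
    calc ∑ v ∈ Finset.univ.filter (fun v : SAIdx L => v.1 = u.1), treeSize L v.1
        ≤ (Finset.univ.filter (fun v : SAIdx L => v.1 = u.1)).card * 2^L := by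
          have := Finset.sum_le_card_nsmul _ _ _ hb
          simpa using this
      _ ≤ (L+1)*2^L := by
          apply Nat.mul_le_mul_right
          exact card_samejob_le L u.1 _ (fun v hv => (Finset.mem_filter.mp hv).2)
  have h2 : ∑ v ∈ Finset.univ.filter (fun v : SAIdx L => iov L v u), treeSize L v.1
      ≤ (L+1)*2^L + 4*2^L := by
    set Fov := Finset.univ.filter (fun v : SAIdx L => iov L v u) with hFov
    rw [← Finset.sum_fiberwise Fov (fun v : SAIdx L => v.1.1) (fun v => treeSize L v.1)]
    have hlev : ∀ ℓ : Fin (L+1), ∑ v ∈ Fov.filter (fun v => v.1.1 = ℓ), treeSize L v.1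
        ≤ treeSize L u.1 + 2*2^(L-(ℓ:ℕ)) := by
      intro ℓ
      set G := Fov.filter (fun v => v.1.1 = ℓ) with hG
      have hGmem : ∀ v ∈ G, v.1.1 = ℓ ∧ iov L v u := by
        intro v hv
        have h := Finset.mem_filter.mp hv
        exact ⟨h.2, (Finset.mem_filter.mp h.1).2⟩
      have hcnt := level_count u ℓ G hGmem
      have hsz : ∀ v ∈ G, treeSize L v.1 = 2^(L-(ℓ:ℕ)) := by
        intro v hv
        unfold treeSize
        rw [(hGmem v hv).1]
      rw [Finset.sum_congr rfl hsz, Finset.sum_const, smul_eq_mul]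
      have step1 : G.card * 2^(L-(ℓ:ℕ)) ≤ ((treeSize L u.1 - 1)/2^(L-(ℓ:ℕ)) + 2) * 2^(L-(ℓ:ℕ)) :=
        Nat.mul_le_mul_right _ hcnt
      have step2 : ((treeSize L u.1 - 1)/2^(L-(ℓ:ℕ)) + 2) * 2^(L-(ℓ:ℕ))
          ≤ treeSize L u.1 + 2*2^(L-(ℓ:ℕ)) := by
        have hd : (treeSize L u.1 - 1)/2^(L-(ℓ:ℕ)) * 2^(L-(ℓ:ℕ)) ≤ treeSize L u.1 - 1 :=
          Nat.div_mul_le_self _ _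
        have hP0 : 0 < treeSize L u.1 := Nat.pow_pos (by norm_num : 0 < 2)
        calc ((treeSize L u.1 - 1)/2^(L-(ℓ:ℕ)) + 2) * 2^(L-(ℓ:ℕ))
            = (treeSize L u.1 - 1)/2^(L-(ℓ:ℕ)) * 2^(L-(ℓ:ℕ)) + 2*2^(L-(ℓ:ℕ)) := by ring
          _ ≤ treeSize L u.1 + 2*2^(L-(ℓ:ℕ)) := by omega
      omega
    calc ∑ ℓ : Fin (L+1), ∑ v ∈ Fov.filter (fun v => v.1.1 = ℓ), treeSize L v.1
        ≤ ∑ ℓ : Fin (L+1), (treeSize L u.1 + 2*2^(L-(ℓ:ℕ))) :=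
          Finset.sum_le_sum (fun ℓ _ => hlev ℓ)
      _ = (L+1) * treeSize L u.1 + 2 * ∑ ℓ : Fin (L+1), 2^(L-(ℓ:ℕ)) := by
          rw [Finset.sum_add_distrib, Finset.sum_const, Finset.card_univ, Fintype.card_fin,
            smul_eq_mul, Finset.mul_sum]
      _ ≤ (L+1)*2^L + 4*2^L := by
          have e1 : treeSize L u.1 ≤ 2^L := by
            unfold treeSize
            exact Nat.pow_le_pow_right (by norm_num) (by omega)
          have e2 : ∑ ℓ : Fin (L+1), 2^(L-(ℓ:ℕ)) ≤ 2*2^L := by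
            rw [Fin.sum_univ_eq_sum_range (fun i => 2^(L-i)) (L+1)]
            rw [← Finset.sum_range_reflect (fun i => 2^(L-i)) (L+1)]
            have e3 : ∀ j ∈ Finset.range (L+1), 2^(L-(L+1-1-j)) = 2^j := by
              intro j hj
              have := Finset.mem_range.mp hj
              congr 1
              omega
            rw [Finset.sum_congr rfl e3, sum_pow2]
            have : 1 ≤ 2^(L+1) := Nat.one_le_two_pow
            have e4 : 2^(L+1) = 2*2^L := by ring
            omega
          have := Nat.mul_le_mul_left (L+1) e1
          omega
  calc ∑ v ∈ Finset.univ.filter (fun v : SAIdx L => v.1 = u.1) ∪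
        Finset.univ.filter (fun v : SAIdx L => iov L v u), treeSize L v.1
      ≤ _ + _ := sum_union_le' _ _ _
    _ ≤ (L+1)*2^L + ((L+1)*2^L + 4*2^L) := Nat.add_le_add h1 h2
    _ = (2*(L+1)+4)*2^L := by ring
lemma row2poly (E Λ X M Sc Tc : ℝ) (hE0 : 0 < E) (hE4 : E ≤ 1/4) (hEΛ : 1 ≤ E*Λ)
    (hΛ2 : 2 ≤ Λ) (hX0 : 0 < X) (hSc0 : 0 ≤ Sc) (hTc0 : 0 ≤ Tc)
    (hc : Sc + Tc + 1 ≤ E*Λ)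
    (hM : Λ^2 * X ≤ M + (Tc * X + Sc * ((2*Λ+4)*X))) :
    (1-4*E) * (Λ * X) * Λ ≤ (1-E) * ((1-E) * M) := by
  have hB0 : (0:ℝ) ≤ (E*Λ-1)*(2*Λ+4) := mul_nonneg (by linarith) (by linarith)
  have hSc2 : Sc*(2*Λ+4) + Tc ≤ (E*Λ-1)*(2*Λ+4) := by nlinarith
  have hMlow : (Λ^2 - (E*Λ-1)*(2*Λ+4)) * X ≤ M := by
    nlinarith [mul_le_mul_of_nonneg_right hSc2 (le_of_lt hX0)]
  have hpoly : (1-4*E)*Λ^2 ≤ (1-E)^2 * (Λ^2 - (E*Λ-1)*(2*Λ+4)) := by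
    have h4E : 4*E*Λ ≤ Λ := by nlinarith
    have a4 : (E*Λ-1)*(2*Λ+4) ≤ (2*E + E^2)*Λ^2 := by nlinarith [sq_nonneg (E*Λ)]
    nlinarith [hB0, a4, sq_nonneg (1-E)]
  have hfin : (1-E)^2 * ((Λ^2 - (E*Λ-1)*(2*Λ+4)) * X) ≤ (1-E)^2 * M :=
    mul_le_mul_of_nonneg_left hMlow (by positivity)
  nlinarith [hfin, mul_le_mul_of_nonneg_right hpoly (le_of_lt hX0)]

lemma Mbound (L : ℕ) (S T : Finset (SAIdx L)) (hS : ConflictFree L S) :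
    (L+1)*((L+1)*2^L) ≤ (∑ v ∈ (Sᶜ \ T).filter (fun v => ConflictFree L (insert v S)), treeSize L v.1)
      + (T.card * 2^L + S.card * ((2*(L+1)+4)*2^L)) := by
  classical
  set Mset := (Sᶜ \ T).filter (fun v => ConflictFree L (insert v S)) with hMset
  set BU := S.biUnion (fun u => Finset.univ.filter (fun v : SAIdx L => confl L v u)) with hBU
  have hcover : (Finset.univ : Finset (SAIdx L)) ⊆ Mset ∪ (T ∪ BU) := by
    intro v _
    by_cases h1 : v ∈ S
    · apply Finset.mem_union_right
      apply Finset.mem_union_right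
      rw [hBU, Finset.mem_biUnion]
      exact ⟨v, h1, Finset.mem_filter.mpr ⟨Finset.mem_univ _, Or.inl rfl⟩⟩
    by_cases h2 : v ∈ T
    · exact Finset.mem_union_right _ (Finset.mem_union_left _ h2)
    by_cases h3 : ConflictFree L (insert v S)
    · apply Finset.mem_union_left
      rw [hMset]
      exact Finset.mem_filter.mpr ⟨Finset.mem_sdiff.mpr ⟨Finset.mem_compl.mpr h1, h2⟩, h3⟩
    · rw [cf_iff] at h3
      push_neg at h3
      obtain ⟨a, ha, b, hb, hab, hconf⟩ := h3
      apply Finset.mem_union_right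
      apply Finset.mem_union_right
      rw [hBU, Finset.mem_biUnion]
      rcases Finset.mem_insert.mp ha with rfl | haS
      · rcases Finset.mem_insert.mp hb with rfl | hbS
        · exact absurd rfl hab
        · exact ⟨b, hbS, Finset.mem_filter.mpr ⟨Finset.mem_univ _, hconf⟩⟩
      · rcases Finset.mem_insert.mp hb with rfl | hbS
        · exact ⟨a, haS, Finset.mem_filter.mpr ⟨Finset.mem_univ _, confl_symm hconf⟩⟩
        · exact absurd (hconf) ((cf_iff S).mp hS a haS b hbS hab)
  calc (L+1)*((L+1)*2^L) = ∑ v : SAIdx L, treeSize L v.1 := (totalmass L).symm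
    _ ≤ ∑ v ∈ Mset ∪ (T ∪ BU), treeSize L v.1 := Finset.sum_le_sum_of_subset hcover
    _ ≤ (∑ v ∈ Mset, treeSize L v.1) + ∑ v ∈ T ∪ BU, treeSize L v.1 := sum_union_le' _ _ _
    _ ≤ (∑ v ∈ Mset, treeSize L v.1) +
        ((∑ v ∈ T, treeSize L v.1) + ∑ v ∈ BU, treeSize L v.1) := by
          have := sum_union_le' T BU (fun v : SAIdx L => treeSize L v.1)
          omega
    _ ≤ (∑ v ∈ Mset, treeSize L v.1) + (T.card * 2^L + S.card * ((2*(L+1)+4)*2^L)) := by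
      have hT : ∑ v ∈ T, treeSize L v.1 ≤ T.card * 2^L := by
        have hb : ∀ v ∈ T, treeSize L v.1 ≤ 2^L := by
          intro v _
          unfold treeSize
          exact Nat.pow_le_pow_right (by norm_num) (by omega)
        have := Finset.sum_le_card_nsmul _ _ _ hb
        simpa using this
      have hB : ∑ v ∈ BU, treeSize L v.1 ≤ S.card * ((2*(L+1)+4)*2^L) := by
        calc ∑ v ∈ BU, treeSize L v.1
            ≤ ∑ u ∈ S, ∑ v ∈ Finset.univ.filter (fun v : SAIdx L => confl L v u), treeSize L v.1 :=
              sum_biUnion_le' _ _ _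
          _ ≤ S.card * ((2*(L+1)+4)*2^L) := by
              have := Finset.sum_le_card_nsmul S
                (fun u => ∑ v ∈ Finset.univ.filter (fun v : SAIdx L => confl L v u), treeSize L v.1)
                ((2*(L+1)+4)*2^L) (fun u _ => CB_bound L u)
              simpa using this
      omega

set_option maxHeartbeats 1000000 in
lemma row2 (L : ℕ) (hL : 1 ≤ L) (ε : ℝ) (hε0 : 0 < ε) (hε1 : ε ≤ 1) :
    SArowI (SAIdx L) ⌊(ε / 4) * ((L : ℝ) + 1)⌋₊
      (fun v => -(treeSize L v.1 : ℝ)) (-((1 - ε) * (((L : ℝ) + 1) * 2 ^ L)))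
      (xsol L ε) := by
  intro S T hd hcard
  obtain ⟨hρ, hc, hρT, hEΛ⟩ := numfacts L ε hε0 hε1 S T hcard
  have hΛ0 : (0:ℝ) < (L:ℝ) + 1 := by positivity
  have hΛ2 : (2:ℝ) ≤ (L:ℝ) + 1 := by
    have : (1:ℝ) ≤ (L:ℝ) := by exact_mod_cast hL
    linarith
  have hE4 : ε/4 ≤ 1/4 := by linarith
  have hρT1 : rho0 L ε * T.card ≤ 1 := by linarith
  have hX0 : (0:ℝ) < (2:ℝ)^L := by positivity
  rw [show (∑ T' ∈ T.powerset, (-1 : ℝ) ^ T'.card *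
      ((∑ v, -(treeSize L v.1 : ℝ) * xsol L ε (insert v (S ∪ T'))) -
        (-((1 - ε) * (((L : ℝ) + 1) * 2 ^ L))) * xsol L ε (S ∪ T'))) = _ from
    Fsplit _ (-((1 - ε) * (((L : ℝ) + 1) * 2 ^ L))) S T hd]
  by_cases hS : ConflictFree L S
  case neg =>
    rw [zf_zero hS]
    have h2 : ∑ v ∈ Sᶜ \ T, -(treeSize L v.1 : ℝ) * zf L ε (insert v S) T = 0 := by
      apply Finset.sum_eq_zero
      intro v _
      rw [zf_zero (fun hcf => hS (cf_subset (Finset.subset_insert v S) hcf)), mul_zero]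
    rw [h2]
    simp
  case pos =>
  set Mset := (Sᶜ \ T).filter (fun v => ConflictFree L (insert v S)) with hMset
  have hzv_nonneg : ∀ v ∈ Sᶜ \ T, 0 ≤ zf L ε (insert v S) T := by
    intro v hv
    have hvT : v ∉ T := (Finset.mem_sdiff.mp hv).2
    have hd' : Disjoint (insert v S) T := by
      rw [Finset.disjoint_left]
      intro a ha
      rcases Finset.mem_insert.mp ha with rfl | ha
      · exact hvT
      · exact Finset.disjoint_left.mp hd ha
    exact zf_nonneg hd' hρ hρT1
  -- second sum bounded by the Mset sum
  have hstep1 : ∑ v ∈ Sᶜ \ T, -(treeSize L v.1 : ℝ) * zf L ε (insert v S) T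
      ≤ -∑ v ∈ Mset, (treeSize L v.1 : ℝ) * zf L ε (insert v S) T := by
    have e1 : ∑ v ∈ Sᶜ \ T, -(treeSize L v.1 : ℝ) * zf L ε (insert v S) T
        = -∑ v ∈ Sᶜ \ T, (treeSize L v.1 : ℝ) * zf L ε (insert v S) T := by
      rw [← Finset.sum_neg_distrib]
      apply Finset.sum_congr rfl
      intro v _; ring
    rw [e1, neg_le_neg_iff]
    apply Finset.sum_le_sum_of_subset_of_nonneg (Finset.filter_subset _ _)
    intro v hv _
    exact mul_nonneg (by positivity) (hzv_nonneg v hv)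
  -- lower bound for the Mset sum
  have hstep2 : rho0 L ε ^ (S.card + 1) * (1 - ε/4) * (∑ v ∈ Mset, (treeSize L v.1 : ℝ))
      ≤ ∑ v ∈ Mset, (treeSize L v.1 : ℝ) * zf L ε (insert v S) T := by
    rw [Finset.mul_sum]
    apply Finset.sum_le_sum
    intro v hv
    have hvm := Finset.mem_filter.mp hv
    have hvS : v ∉ S := by
      have := (Finset.mem_sdiff.mp hvm.1).1
      simpa using this
    have hvT : v ∉ T := (Finset.mem_sdiff.mp hvm.1).2
    have hd' : Disjoint (insert v S) T := by
      rw [Finset.disjoint_left]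
      intro a ha
      rcases Finset.mem_insert.mp ha with rfl | ha
      · exact hvT
      · exact Finset.disjoint_left.mp hd ha
    rw [zf_eq hd', Finset.card_insert_of_notMem hvS]
    have hJ := (Jf_bounds (T := T) hvm.2 hρ hρT1).1
    have hJ' : 1 - ε/4 ≤ Jf L ε (insert v S) T := by linarith
    have hpow : (0:ℝ) ≤ rho0 L ε ^ (S.card + 1) := by positivity
    calc rho0 L ε ^ (S.card + 1) * (1 - ε/4) * (treeSize L v.1 : ℝ)
        ≤ rho0 L ε ^ (S.card + 1) * Jf L ε (insert v S) T * (treeSize L v.1 : ℝ) := by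
          apply mul_le_mul_of_nonneg_right _ (by positivity)
          exact mul_le_mul_of_nonneg_left hJ' hpow
      _ = (treeSize L v.1 : ℝ) * (rho0 L ε ^ (S.card+1) * Jf L ε (insert v S) T) := by ring
  -- the key counting bound
  have hM : ((L:ℝ)+1)^2 * 2^L ≤ (∑ v ∈ Mset, (treeSize L v.1 : ℝ))
      + ((T.card : ℝ) * 2^L + (S.card:ℝ) * ((2*((L:ℝ)+1)+4)*2^L)) := by
    have := Mbound L S T hS
    have hcast : ((((L:ℕ)+1)*(((L:ℕ)+1)*2^L) : ℕ) : ℝ) ≤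
        ((((∑ v ∈ Mset, treeSize L v.1) + (T.card * 2^L + S.card * ((2*(L+1)+4)*2^L))) : ℕ) : ℝ) := by
      exact_mod_cast this
    push_cast at hcast
    calc ((L:ℝ)+1)^2 * 2^L = ((L:ℝ)+1)*(((L:ℝ)+1)*2^L) := by ring
      _ ≤ _ := by
        refine le_trans hcast ?_
        apply le_of_eq
        ring
  -- numeric endgame
  set E := ε/4 with hE
  set Λ := (L:ℝ)+1 with hΛdef
  set Mr := (∑ v ∈ Mset, (treeSize L v.1 : ℝ)) with hMr
  have hMr0 : 0 ≤ Mr := by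
    rw [hMr]; positivity
  have hkey : (1-4*E) * (Λ * 2^L) ≤ rho0 L ε * ((1 - E) * Mr) := by
    have hrho : rho0 L ε = (1-E)/Λ := by
      rw [hE, hΛdef]
      rfl
    rw [hrho, div_mul_eq_mul_div, le_div_iff₀ hΛ0]
    exact row2poly E Λ (2^L) Mr (S.card) (T.card) (by rw [hE]; linarith) hE4 hEΛ hΛ2 hX0
      (Nat.cast_nonneg _) (Nat.cast_nonneg _) hc (by linarith [hM])
  -- assemble
  have hz_ub : zf L ε S T ≤ rho0 L ε ^ S.card := by
    rw [zf_eq hd]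
    have := (Jf_bounds (T := T) hS hρ hρT1).2
    nlinarith [pow_nonneg hρ S.card]
  have hz_lb : 0 ≤ zf L ε S T := zf_nonneg hd hρ hρT1
  set W := (∑ v ∈ S, -(treeSize L v.1 : ℝ)) - (-((1 - ε) * (Λ * 2 ^ L))) with hW
  have hWle : W ≤ (1-ε)*(Λ*2^L) := by
    rw [hW]
    have : 0 ≤ ∑ v ∈ S, (treeSize L v.1 : ℝ) := by positivity
    have e : ∑ v ∈ S, -(treeSize L v.1:ℝ) = -∑ v ∈ S, (treeSize L v.1:ℝ) := by
      rw [← Finset.sum_neg_distrib]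
    rw [e]
    linarith
  have hεE : (1:ℝ) - ε = 1 - 4*E := by rw [hE]; ring
  have hmain : W * zf L ε S T ≤ rho0 L ε ^ (S.card+1) * (1-E) * Mr := by
    rcases le_or_gt W 0 with hW0 | hW0
    · have h1 : W * zf L ε S T ≤ 0 := mul_nonpos_of_nonpos_of_nonneg hW0 hz_lb
      have h2 : 0 ≤ rho0 L ε ^ (S.card+1) * (1-E) * Mr := by
        apply mul_nonneg (mul_nonneg (by positivity) (by rw [hE]; linarith))
        exact hMr0
      linarith
    · calc W * zf L ε S T ≤ W * rho0 L ε ^ S.card :=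
            mul_le_mul_of_nonneg_left hz_ub (le_of_lt hW0)
        _ ≤ (1-4*E) * (Λ*2^L) * rho0 L ε ^ S.card := by
            apply mul_le_mul_of_nonneg_right _ (by positivity)
            rw [← hεE]; exact hWle
        _ ≤ rho0 L ε * ((1-E) * Mr) * rho0 L ε ^ S.card := by
            apply mul_le_mul_of_nonneg_right hkey (by positivity)
        _ = rho0 L ε ^ (S.card+1) * (1-E) * Mr := by
            rw [pow_succ]; ring
  linarith [hstep1, hstep2, hmain]
lemma xsol_empty (L : ℕ) (ε : ℝ) : xsol L ε ∅ = 1 := by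
  unfold xsol
  rw [if_pos (cf_empty L), Finset.card_empty, pow_zero]
/-- Sherali-Adams feasibility of the laminar gap instance. With
`ε' = ε/4` and `q = ⌊ε'(L+1)⌋` rounds, the assignment `xsol` is a feasible solution to
the `q`-round Sherali-Adams lift of the LP with variables `x_{j,t}`, the objective
constraint `∑ x_{j,t} p_j ≥ (1−ε)T`, the per-job constraints `∑_t x_{j,t} ≤ 1`, the
per-time congestion constraints, and nonnegativity (`T = (L+1)·2^L`). -/
theorem stmt14 (L : ℕ) (hL : 1 ≤ L) (ε : ℝ) (hε0 : 0 < ε) (hε1 : ε ≤ 1) :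
    xsol L ε ∅ = 1 ∧
    SArowI (SAIdx L) ⌊(ε / 4) * ((L : ℝ) + 1)⌋₊
      (fun v => -(treeSize L v.1 : ℝ)) (-((1 - ε) * (((L : ℝ) + 1) * 2 ^ L)))
      (xsol L ε) ∧
    (∀ j₀ : TreeJob L, SArowI (SAIdx L) ⌊(ε / 4) * ((L : ℝ) + 1)⌋₊
      (fun v => if v.1 = j₀ then 1 else 0) 1 (xsol L ε)) ∧
    (∀ t' : ℕ, SArowI (SAIdx L) ⌊(ε / 4) * ((L : ℝ) + 1)⌋₊
      (fun v => if istart L v < t' ∧ t' ≤ istart L v + treeSize L v.1 then 1 else 0) 1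
      (xsol L ε)) ∧
    (∀ v₀ : SAIdx L, SArowI (SAIdx L) ⌊(ε / 4) * ((L : ℝ) + 1)⌋₊
      (fun v => if v = v₀ then -1 else 0) 0 (xsol L ε)) := by
  refine ⟨xsol_empty L ε, row2 L hL ε hε0 hε1, fun j₀ => row3 L ε hε0 hε1 j₀,
    fun t' => row4 L ε hε0 hε1 t', fun v₀ => row5 L ε hε0 hε1 v₀⟩
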